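/- arXiv:1002.2021 — 2 statements merged into one kernel-verified Lean document; each statement's English description precedes it below -/
import Mathlib

section
/- Let D ≥ 1, M ≥ 2, u' ∈ ℝ^D and θ' > 0, and let f(ξ) = Σ_{|α| ≤ M} f_α 𝓗_{θ',α}(v') with v' = (ξ − u')/√θ'. Define ρ = ∫_{ℝ^D} f(ξ) dξ, ρ u = ∫_{ℝ^D} ξ f(ξ) dξ, and ρ|u|² + Dρθ = ∫_{ℝ^D} |ξ|² f(ξ) dξ. Then: (i) ρ = f_0; (ii) ρ u = ρ u' + (f_{e_1}, …, f_{e_D})ᵀ; (iii) ρ|u|² + Dρθ = 2ρ u·u' − ρ|u'|² + Σ_{d=1}^D (θ' f_0 + 2 f_{2e_d}). -/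
open MeasureTheory

/-- The probabilists' Hermite polynomial `He n`, evaluated at a real number. -/
noncomputable def He (n : ℕ) (x : ℝ) : ℝ :=
  Polynomial.aeval x (Polynomial.hermite n)

/-- The basis function `𝓗_{θ,α}(v) = ∏_d (2π)^(-1/2) θ^(-(α_d+1)/2) He_{α_d}(v_d) e^(-v_d²/2)`. -/
noncomputable def Hb {D : ℕ} (θ : ℝ) (α : Fin D → ℕ) (v : Fin D → ℝ) : ℝ :=
  ∏ d, ((Real.sqrt (2 * Real.pi))⁻¹ * θ ^ (-(((α d : ℝ) + 1) / 2)) * He (α d) (v d) *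
    Real.exp (-(v d) ^ 2 / 2))


/-- The finite set of multi-indices `α : Fin D → ℕ` with `|α| ≤ M`. -/
noncomputable def multiIndices (D M : ℕ) : Finset (Fin D → ℕ) :=
  ((Finset.univ : Finset (Fin D → Fin (M + 1))).image (fun a => fun d => (a d : ℕ))).filter
    (fun α => (∑ d, α d) ≤ M)

/-- The normalization constant `C_{θ,α} = (2π)^{D/2} θ^{D+|α|} / (α₁!⋯α_D!)`. -/
noncomputable def Cc (D : ℕ) (θ : ℝ) (α : Fin D → ℕ) : ℝ :=
  (2 * Real.pi) ^ ((D : ℝ) / 2) * θ ^ (D + ∑ d, α d) / ∏ d, (Nat.factorial (α d) : ℝ)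

open Real Filter Polynomial

noncomputable def Qh (n : ℕ) : Polynomial ℝ := (Polynomial.hermite n).map (Int.castRingHom ℝ)

lemma He_eq (n : ℕ) (x : ℝ) : He n x = (Qh n).eval x := by
  simp [He, Qh, Polynomial.aeval_def, Polynomial.eval₂_eq_eval_map]

lemma Qh_succ (n : ℕ) : Qh (n+1) = X * Qh n - derivative (Qh n) := by
  simp [Qh, Polynomial.hermite_succ, Polynomial.derivative_map]

lemma Qh_zero : Qh 0 = 1 := by simp [Qh, Polynomial.hermite_zero]
lemma Qh_one : Qh 1 = X := by simp [Qh, Polynomial.hermite_one]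

lemma deriv_Qh (n : ℕ) : derivative (Qh (n+1)) = C ((n:ℝ)+1) * Qh n := by
  induction n with
  | zero => simp [Qh_one, Qh_zero]
  | succ m ih =>
      have hs := Qh_succ m
      have hC : (C ((m:ℝ)+1+1) : Polynomial ℝ) = C ((m:ℝ)+1) + 1 := by
        rw [← C_1, ← C_add]
      rw [Qh_succ (m+1), derivative_sub, derivative_mul, derivative_X, ih,
        Polynomial.derivative_C_mul]
      push_cast
      rw [hC, hs]
      ring

lemma int_pow_gauss (n : ℕ) : Integrable (fun x : ℝ => x ^ n * Real.exp (-(x^2/2))) := by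
  have h := integrable_rpow_mul_exp_neg_mul_sq (b := (1/2:ℝ)) (by norm_num)
    (s := (n:ℝ)) (lt_of_lt_of_le neg_one_lt_zero (Nat.cast_nonneg n))
  have h2 : (fun x:ℝ => x ^ (n:ℝ) * Real.exp (-(1/2) * x ^ 2))
      = fun x => x ^ n * Real.exp (-(x^2/2)) := by
    funext x
    rw [Real.rpow_natCast]
    ring_nf
  rwa [h2] at h

lemma int_poly_gauss (P : Polynomial ℝ) :
    Integrable (fun x : ℝ => P.eval x * Real.exp (-(x^2/2))) := by
  have h2 : (fun x : ℝ => P.eval x * Real.exp (-(x^2/2)))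
      = fun x => ∑ i ∈ Finset.range (P.natDegree + 1),
          P.coeff i * (x ^ i * Real.exp (-(x^2/2))) := by
    funext x
    rw [Polynomial.eval_eq_sum_range, Finset.sum_mul]
    exact Finset.sum_congr rfl fun i _ => by ring
  rw [h2]
  exact integrable_finset_sum _ fun i _ => (int_pow_gauss i).const_mul _

lemma tendsto_pow_gauss_top (n : ℕ) :
    Tendsto (fun x : ℝ => x ^ n * Real.exp (-(x^2/2))) atTop (nhds 0) := by
  have h := rpow_mul_exp_neg_mul_sq_isLittleO_exp_neg (b := (1/2:ℝ)) (by norm_num) (n:ℝ)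
  have h2 : (fun x:ℝ => x ^ (n:ℝ) * Real.exp (-(1/2) * x ^ 2))
      = fun x => x ^ n * Real.exp (-(x^2/2)) := by
    funext x; rw [Real.rpow_natCast]; ring_nf
  rw [h2] at h
  have hexp : Tendsto (fun x : ℝ => Real.exp (-(1/2) * x)) atTop (nhds 0) := by
    have h1 : Tendsto (fun x : ℝ => (1/2 : ℝ) * x) atTop atTop :=
      Filter.Tendsto.const_mul_atTop (by norm_num) tendsto_id
    have h2' := Real.tendsto_exp_neg_atTop_nhds_zero.comp h1
    have h3 : (fun x : ℝ => Real.exp (-(1/2) * x))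
        = (fun x : ℝ => Real.exp (-x)) ∘ (fun x => (1/2:ℝ) * x) := by
      funext x; simp [Function.comp, neg_mul]
    rw [h3]; exact h2'
  exact h.isBigO.trans_tendsto hexp

lemma tendsto_poly_gauss_top (P : Polynomial ℝ) :
    Tendsto (fun x : ℝ => P.eval x * Real.exp (-(x^2/2))) atTop (nhds 0) := by
  have h2 : (fun x : ℝ => P.eval x * Real.exp (-(x^2/2)))
      = fun x => ∑ i ∈ Finset.range (P.natDegree + 1),
          P.coeff i * (x ^ i * Real.exp (-(x^2/2))) := by
    funext x
    rw [Polynomial.eval_eq_sum_range, Finset.sum_mul]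
    exact Finset.sum_congr rfl fun i _ => by ring
  rw [h2]
  have : (0:ℝ) = ∑ i ∈ Finset.range (P.natDegree + 1), P.coeff i * 0 := by simp
  rw [this]
  exact tendsto_finset_sum _ fun i _ => (tendsto_pow_gauss_top i).const_mul _

lemma tendsto_poly_gauss_bot (P : Polynomial ℝ) :
    Tendsto (fun x : ℝ => P.eval x * Real.exp (-(x^2/2))) atBot (nhds 0) := by
  have h := (tendsto_poly_gauss_top (P.comp (-X))).comp tendsto_neg_atBot_atTop
  have h2 : ((fun x : ℝ => (P.comp (-X)).eval x * Real.exp (-(x^2/2))) ∘ fun x : ℝ => -x)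
      = fun x : ℝ => P.eval x * Real.exp (-(x^2/2)) := by
    funext x
    simp [Function.comp, Polynomial.eval_comp]
  rwa [h2] at h

lemma integral_deriv_zero {g g' : ℝ → ℝ} (hd : ∀ x, HasDerivAt g (g' x) x)
    (hi : Integrable g') (ht : Tendsto g atTop (nhds 0)) (hb : Tendsto g atBot (nhds 0)) :
    ∫ x, g' x = 0 := by
  have hA := integral_Ioi_of_hasDerivAt_of_tendsto (a := 0) (m := 0)
    (hd 0).continuousAt.continuousWithinAt (fun x _ => hd x) hi.integrableOn ht
  have hB := integral_Iic_of_hasDerivAt_of_tendsto (a := 0) (m := 0)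
    (hd 0).continuousAt.continuousWithinAt (fun x _ => hd x) hi.integrableOn hb
  rw [← intervalIntegral.integral_Iic_add_Ioi hi.integrableOn hi.integrableOn, hA, hB]
  ring

lemma gauss_hasDeriv (x : ℝ) :
    HasDerivAt (fun y : ℝ => Real.exp (-(y^2/2))) (-x * Real.exp (-(x^2/2))) x := by
  have h1 : HasDerivAt (fun y : ℝ => -(y^2/2)) (-x) x := by
    have := ((hasDerivAt_pow 2 x).div_const 2).neg
    convert this using 1 <;> first | rfl | (funext y; ring) | (simp; ring) | simp
  have h2 := h1.exp
  convert h2 using 1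
  ring

lemma He_gauss_hasDeriv (n : ℕ) (x : ℝ) :
    HasDerivAt (fun y : ℝ => He n y * Real.exp (-(y^2/2)))
      (-(He (n+1) x * Real.exp (-(x^2/2)))) x := by
  have hp : HasDerivAt (fun y : ℝ => He n y) ((derivative (Qh n)).eval x) x := by
    simp only [He_eq]
    exact (Qh n).hasDerivAt x
  have := hp.mul (gauss_hasDeriv x)
  refine this.congr_deriv ?_
  have hq : He (n+1) x = x * He n x - (derivative (Qh n)).eval x := by
    simp [He_eq, Qh_succ]
  rw [hq, He_eq]
  ring

lemma intHe_succ (n : ℕ) : ∫ x : ℝ, He (n+1) x * Real.exp (-(x^2/2)) = 0 := by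
  have hint : Integrable (fun x : ℝ => He (n+1) x * Real.exp (-(x^2/2))) := by
    have := int_poly_gauss (Qh (n+1))
    simpa [He_eq] using this
  have h := integral_deriv_zero (g := fun y : ℝ => He n y * Real.exp (-(y^2/2)))
    (g' := fun x => -(He (n+1) x * Real.exp (-(x^2/2)))) (He_gauss_hasDeriv n)
    hint.neg ?_ ?_
  · rw [integral_neg] at h
    linarith [h]
  · have := tendsto_poly_gauss_top (Qh n)
    simpa [He_eq] using this
  · have := tendsto_poly_gauss_bot (Qh n)
    simpa [He_eq] using this

lemma He_zero_eq (x : ℝ) : He 0 x = 1 := by simp [He_eq, Qh_zero]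
lemma He_one_eq (x : ℝ) : He 1 x = x := by simp [He_eq, Qh_one]

lemma intGauss : ∫ x : ℝ, Real.exp (-(x^2/2)) = Real.sqrt (2 * Real.pi) := by
  have h := integral_gaussian (1/2)
  have h2 : (fun x : ℝ => Real.exp (-(1/2) * x ^ 2)) = fun x => Real.exp (-(x^2/2)) := by
    funext x; ring_nf
  rw [h2] at h
  rw [h, show Real.pi / (1/2) = 2 * Real.pi by ring]

lemma intHe (n : ℕ) :
    ∫ x : ℝ, He n x * Real.exp (-(x^2/2)) = if n = 0 then Real.sqrt (2 * Real.pi) else 0 := by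
  cases n with
  | zero => simp [He_zero_eq, intGauss]
  | succ m => simp [intHe_succ m]

lemma intHe_int (n : ℕ) : Integrable (fun x : ℝ => He n x * Real.exp (-(x^2/2))) := by
  simpa [He_eq] using int_poly_gauss (Qh n)

lemma intXHe_int (n : ℕ) : Integrable (fun x : ℝ => x * He n x * Real.exp (-(x^2/2))) := by
  have := int_poly_gauss (X * Qh n)
  simpa [He_eq] using this

lemma intXXHe_int (n : ℕ) : Integrable (fun x : ℝ => x^2 * He n x * Real.exp (-(x^2/2))) := by
  have := int_poly_gauss (X^2 * Qh n)
  simpa [He_eq] using this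

lemma xHe_succ (m : ℕ) (x : ℝ) :
    x * He (m+1) x = He (m+2) x + ((m:ℝ)+1) * He m x := by
  simp only [He_eq, Qh_succ (m+1), deriv_Qh m, Polynomial.eval_sub, Polynomial.eval_mul,
    Polynomial.eval_X, Polynomial.eval_C]
  ring

lemma intXHe (n : ℕ) :
    ∫ x : ℝ, x * He n x * Real.exp (-(x^2/2))
      = if n = 1 then Real.sqrt (2 * Real.pi) else 0 := by
  cases n with
  | zero =>
      have h : (fun x : ℝ => x * He 0 x * Real.exp (-(x^2/2)))
          = fun x => He 1 x * Real.exp (-(x^2/2)) := by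
        funext x; rw [He_zero_eq, He_one_eq]; ring
      rw [h, intHe_succ 0]
      simp
  | succ m =>
      have h : (fun x : ℝ => x * He (m+1) x * Real.exp (-(x^2/2)))
          = fun x => He (m+2) x * Real.exp (-(x^2/2))
              + ((m:ℝ)+1) * (He m x * Real.exp (-(x^2/2))) := by
        funext x
        rw [show x * He (m+1) x * Real.exp (-(x^2/2))
            = (x * He (m+1) x) * Real.exp (-(x^2/2)) by ring, xHe_succ m x]
        ring
      rw [h, integral_add (intHe_int (m+2)) ((intHe_int m).const_mul _),
        MeasureTheory.integral_const_mul, intHe_succ (m+1), intHe m]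
      cases m <;> simp

lemma intXXHe (n : ℕ) :
    ∫ x : ℝ, x^2 * He n x * Real.exp (-(x^2/2))
      = if n = 0 then Real.sqrt (2 * Real.pi)
        else if n = 2 then 2 * Real.sqrt (2 * Real.pi) else 0 := by
  cases n with
  | zero =>
      have h : (fun x : ℝ => x^2 * He 0 x * Real.exp (-(x^2/2)))
          = fun x => x * He 1 x * Real.exp (-(x^2/2)) := by
        funext x; rw [He_zero_eq, He_one_eq]; ring
      rw [h, intXHe 1]
      simp
  | succ m =>
      have h : (fun x : ℝ => x^2 * He (m+1) x * Real.exp (-(x^2/2)))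
          = fun x => x * He (m+2) x * Real.exp (-(x^2/2))
              + ((m:ℝ)+1) * (x * He m x * Real.exp (-(x^2/2))) := by
        funext x
        rw [show x^2 * He (m+1) x * Real.exp (-(x^2/2))
            = x * (x * He (m+1) x) * Real.exp (-(x^2/2)) by ring, xHe_succ m x]
        ring
      rw [h, integral_add (intXHe_int (m+2)) ((intXHe_int m).const_mul _),
        MeasureTheory.integral_const_mul, intXHe (m+2), intXHe m]
      rcases m with _ | _ | k <;> simp <;> norm_num

noncomputable def G (θ : ℝ) (n : ℕ) (u0 t : ℝ) : ℝ :=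
  (Real.sqrt (2 * Real.pi))⁻¹ * θ ^ (-(((n : ℝ) + 1) / 2)) * He n ((t - u0) / Real.sqrt θ) *
    Real.exp (-((t - u0) / Real.sqrt θ) ^ 2 / 2)

lemma int_shift_scale (H : ℝ → ℝ) (u0 s : ℝ) (hs : 0 < s) :
    ∫ t : ℝ, H ((t - u0) / s) = s * ∫ v, H v := by
  have h1 : (fun t : ℝ => H ((t - u0) / s)) = fun t : ℝ => (fun y => H (y / s)) (t - u0) := rfl
  rw [h1, MeasureTheory.integral_sub_right_eq_self (fun y => H (y / s)) u0,
    MeasureTheory.Measure.integral_comp_div, abs_of_pos hs, smul_eq_mul]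

lemma sqrt2pi_pos : 0 < Real.sqrt (2 * Real.pi) :=
  Real.sqrt_pos.2 (by positivity)

lemma sqrt2pi_ne : Real.sqrt (2 * Real.pi) ≠ 0 := ne_of_gt sqrt2pi_pos

variable {θ : ℝ}

lemma sqrt_rpow_helper (hθ : 0 < θ) (m : ℕ) (r : ℝ) :
    (Real.sqrt θ) ^ m * θ ^ (r : ℝ) = θ ^ ((m : ℝ)/2 + r) := by
  rw [Real.sqrt_eq_rpow, ← Real.rpow_natCast (θ ^ ((1:ℝ)/2)) m, ← Real.rpow_mul hθ.le,
    ← Real.rpow_add hθ]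
  congr 1
  ring

lemma theta_cancel (hθ : 0 < θ) (k : ℕ) :
    Real.sqrt θ ^ (k+1) * θ ^ (-(((k:ℝ)+1)/2)) = 1 := by
  rw [sqrt_rpow_helper hθ, show (((k+1:ℕ):ℝ))/2 + (-(((k:ℝ)+1)/2)) = 0 by push_cast; ring,
    Real.rpow_zero]

lemma theta_cancel' (hθ : 0 < θ) :
    Real.sqrt θ ^ 3 * θ ^ (-((((0:ℕ):ℝ)+1)/2)) = θ := by
  rw [sqrt_rpow_helper hθ, show ((3:ℕ):ℝ)/2 + (-((((0:ℕ):ℝ)+1)/2)) = 1 by push_cast; ring,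
    Real.rpow_one]

lemma Gint0 (hθ : 0 < θ) (n : ℕ) (u0 : ℝ) :
    ∫ t : ℝ, G θ n u0 t = if n = 0 then 1 else 0 := by
  have hA : (fun t : ℝ => G θ n u0 t) = fun t : ℝ =>
      (fun v => ((Real.sqrt (2 * Real.pi))⁻¹ * θ ^ (-(((n : ℝ) + 1) / 2))) *
        (He n v * Real.exp (-(v^2/2)))) ((t - u0) / Real.sqrt θ) := by
    funext t
    simp only [G]
    rw [neg_div]
    ring
  have hS := int_shift_scale (fun v => ((Real.sqrt (2 * Real.pi))⁻¹ * θ ^ (-(((n : ℝ) + 1) / 2))) *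
        (He n v * Real.exp (-(v^2/2)))) u0 (Real.sqrt θ) (Real.sqrt_pos.2 hθ)
  rw [hA, hS, MeasureTheory.integral_const_mul, intHe]
  rcases n with _ | m
  · rw [if_pos rfl, if_pos rfl]
    have hc := theta_cancel hθ 0
    have h2 : Real.sqrt θ * ((Real.sqrt (2*Real.pi))⁻¹ * θ ^ (-((((0:ℕ):ℝ) + 1) / 2)) *
        Real.sqrt (2*Real.pi)) = Real.sqrt θ ^ (0+1) * θ ^ (-((((0:ℕ):ℝ)+1)/2)) := by
      field_simp
      ring
    rw [h2, hc]
  · simp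

lemma theta_cancel2 (hθ : 0 < θ) (m : ℕ) (r : ℝ) (h : (m:ℝ)/2 + r = 0) :
    Real.sqrt θ ^ m * θ ^ r = 1 := by
  rw [sqrt_rpow_helper hθ, h, Real.rpow_zero]

lemma AC (hθ : 0 < θ) (m n : ℕ) (x : ℝ) (h : (m:ℝ)/2 + (-(((n:ℝ)+1)/2)) = x) :
    Real.sqrt θ ^ m * ((Real.sqrt (2*Real.pi))⁻¹ * θ ^ (-(((n:ℝ)+1)/2))) * Real.sqrt (2*Real.pi)
      = θ ^ x := by
  have hc := sqrt_rpow_helper hθ m (-(((n:ℝ)+1)/2))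
  rw [h] at hc
  linear_combination ((Real.sqrt (2*Real.pi))⁻¹ * Real.sqrt (2*Real.pi)) * hc
    + (θ ^ x) * inv_mul_cancel₀ sqrt2pi_ne

lemma AC1 (hθ : 0 < θ) (m n : ℕ) (h : (m:ℝ) = (n:ℝ)+1) :
    Real.sqrt θ ^ m * ((Real.sqrt (2*Real.pi))⁻¹ * θ ^ (-(((n:ℝ)+1)/2))) * Real.sqrt (2*Real.pi)
      = 1 := by
  have := AC hθ m n 0 (by rw [h]; ring)
  rwa [Real.rpow_zero] at this

lemma ACθ (hθ : 0 < θ) (m n : ℕ) (h : (m:ℝ) = (n:ℝ)+3) :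
    Real.sqrt θ ^ m * ((Real.sqrt (2*Real.pi))⁻¹ * θ ^ (-(((n:ℝ)+1)/2))) * Real.sqrt (2*Real.pi)
      = θ := by
  have := AC hθ m n 1 (by rw [h]; ring)
  rwa [Real.rpow_one] at this

lemma Gint1 (hθ : 0 < θ) (n : ℕ) (u0 : ℝ) :
    ∫ t : ℝ, t * G θ n u0 t = if n = 0 then u0 else if n = 1 then 1 else 0 := by
  have hs : Real.sqrt θ ≠ 0 := ne_of_gt (Real.sqrt_pos.2 hθ)
  set A : ℝ := (Real.sqrt (2 * Real.pi))⁻¹ * θ ^ (-(((n : ℝ) + 1) / 2)) with hAdef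
  have hA : (fun t : ℝ => t * G θ n u0 t) = fun t : ℝ =>
      (fun v => (Real.sqrt θ * A) * (v * He n v * Real.exp (-(v^2/2)))
        + (u0 * A) * (He n v * Real.exp (-(v^2/2)))) ((t - u0) / Real.sqrt θ) := by
    funext t
    simp only [G, ← hAdef]
    rw [neg_div]
    field_simp
    ring
  have hS := int_shift_scale (fun v => (Real.sqrt θ * A) * (v * He n v * Real.exp (-(v^2/2)))
        + (u0 * A) * (He n v * Real.exp (-(v^2/2)))) u0 (Real.sqrt θ) (Real.sqrt_pos.2 hθ)
  rw [hA, hS, MeasureTheory.integral_add ((intXHe_int n).const_mul _)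
    ((intHe_int n).const_mul _), MeasureTheory.integral_const_mul,
    MeasureTheory.integral_const_mul, intXHe, intHe, hAdef]
  by_cases h0 : n = 0
  · have hAC := AC1 hθ 1 0 (by norm_num)
    norm_num [h0]
    norm_num at hAC
    linear_combination u0 * hAC
  by_cases h1 : n = 1
  · have hAC := AC1 hθ 2 1 (by norm_num)
    norm_num [h1]
    norm_num at hAC
    linear_combination hAC
  · simp [h0, h1]

lemma Gint2 (hθ : 0 < θ) (n : ℕ) (u0 : ℝ) :
    ∫ t : ℝ, t^2 * G θ n u0 t
      = if n = 0 then u0^2 + θ else if n = 1 then 2*u0 else if n = 2 then 2 else 0 := by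
  have hs : Real.sqrt θ ≠ 0 := ne_of_gt (Real.sqrt_pos.2 hθ)
  set A : ℝ := (Real.sqrt (2 * Real.pi))⁻¹ * θ ^ (-(((n : ℝ) + 1) / 2)) with hAdef
  have hA : (fun t : ℝ => t^2 * G θ n u0 t) = fun t : ℝ =>
      (fun v => (Real.sqrt θ * Real.sqrt θ * A) * (v^2 * He n v * Real.exp (-(v^2/2)))
        + ((2 * Real.sqrt θ * u0 * A) * (v * He n v * Real.exp (-(v^2/2)))
        + (u0 * u0 * A) * (He n v * Real.exp (-(v^2/2))))) ((t - u0) / Real.sqrt θ) := by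
    funext t
    simp only [G, ← hAdef]
    rw [neg_div]
    field_simp
    ring
  have hS := int_shift_scale (fun v =>
      (Real.sqrt θ * Real.sqrt θ * A) * (v^2 * He n v * Real.exp (-(v^2/2)))
        + ((2 * Real.sqrt θ * u0 * A) * (v * He n v * Real.exp (-(v^2/2)))
        + (u0 * u0 * A) * (He n v * Real.exp (-(v^2/2))))) u0 (Real.sqrt θ)
    (Real.sqrt_pos.2 hθ)
  have hCD : Integrable (fun v : ℝ => (2 * Real.sqrt θ * u0 * A) *
      (v * He n v * Real.exp (-(v^2/2)))
      + (u0 * u0 * A) * (He n v * Real.exp (-(v^2/2)))) :=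
    ((intXHe_int n).const_mul _).add ((intHe_int n).const_mul _)
  rw [hA, hS, MeasureTheory.integral_add ((intXXHe_int n).const_mul _) hCD,
    MeasureTheory.integral_add ((intXHe_int n).const_mul _) ((intHe_int n).const_mul _),
    MeasureTheory.integral_const_mul, MeasureTheory.integral_const_mul,
    MeasureTheory.integral_const_mul, intXXHe, intXHe, intHe, hAdef]
  by_cases h0 : n = 0
  · have hAC1 := AC1 hθ 1 0 (by norm_num)
    have hACθ := ACθ hθ 3 0 (by norm_num)
    norm_num [h0]
    norm_num at hAC1 hACθ
    linear_combination hACθ + (u0 * u0) * hAC1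
  by_cases h1 : n = 1
  · have hAC := AC1 hθ 2 1 (by norm_num)
    norm_num [h1]
    norm_num at hAC
    linear_combination (2 * u0) * hAC
  by_cases h2 : n = 2
  · have hAC := AC1 hθ 3 2 (by norm_num)
    norm_num [h2]
    norm_num at hAC
    linear_combination 2 * hAC
  · simp [h0, h1, h2]

lemma integrable_shift_scale {H : ℝ → ℝ} (hH : Integrable H) (u0 : ℝ) {s : ℝ} (hs : s ≠ 0) :
    Integrable fun t : ℝ => H ((t - u0) / s) :=
  Integrable.comp_sub_right (hH.comp_div hs) u0

lemma G_int (hθ : 0 < θ) (n : ℕ) (u0 : ℝ) : Integrable (G θ n u0) := by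
  have hW : Integrable (fun v : ℝ => ((Real.sqrt (2*Real.pi))⁻¹ * θ ^ (-(((n:ℝ)+1)/2))) *
      (He n v * Real.exp (-(v^2/2)))) := (intHe_int n).const_mul _
  have h2 := integrable_shift_scale hW u0 (ne_of_gt (Real.sqrt_pos.2 hθ))
  have hfun : G θ n u0 = fun t => ((Real.sqrt (2*Real.pi))⁻¹ * θ ^ (-(((n:ℝ)+1)/2))) *
      (He n ((t - u0) / Real.sqrt θ) * Real.exp (-(((t - u0) / Real.sqrt θ)^2/2))) := by
    funext t
    simp only [G]
    rw [neg_div]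
    ring
  rw [hfun]
  exact h2

lemma G1_int (hθ : 0 < θ) (n : ℕ) (u0 : ℝ) :
    Integrable (fun t : ℝ => t * G θ n u0 t) := by
  have hs : Real.sqrt θ ≠ 0 := ne_of_gt (Real.sqrt_pos.2 hθ)
  set A : ℝ := (Real.sqrt (2 * Real.pi))⁻¹ * θ ^ (-(((n : ℝ) + 1) / 2)) with hAdef
  have hW : Integrable (fun v : ℝ => (Real.sqrt θ * A) * (v * He n v * Real.exp (-(v^2/2)))
        + (u0 * A) * (He n v * Real.exp (-(v^2/2)))) :=
    ((intXHe_int n).const_mul _).add ((intHe_int n).const_mul _)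
  have h2 := integrable_shift_scale hW u0 hs
  have hA : (fun t : ℝ => t * G θ n u0 t) = fun t : ℝ =>
      (fun v => (Real.sqrt θ * A) * (v * He n v * Real.exp (-(v^2/2)))
        + (u0 * A) * (He n v * Real.exp (-(v^2/2)))) ((t - u0) / Real.sqrt θ) := by
    funext t
    simp only [G, ← hAdef]
    rw [neg_div]
    field_simp
    ring
  rw [hA]
  exact h2

lemma G2_int (hθ : 0 < θ) (n : ℕ) (u0 : ℝ) :
    Integrable (fun t : ℝ => t^2 * G θ n u0 t) := by
  have hs : Real.sqrt θ ≠ 0 := ne_of_gt (Real.sqrt_pos.2 hθ)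
  set A : ℝ := (Real.sqrt (2 * Real.pi))⁻¹ * θ ^ (-(((n : ℝ) + 1) / 2)) with hAdef
  have hW : Integrable (fun v : ℝ =>
      (Real.sqrt θ * Real.sqrt θ * A) * (v^2 * He n v * Real.exp (-(v^2/2)))
        + ((2 * Real.sqrt θ * u0 * A) * (v * He n v * Real.exp (-(v^2/2)))
        + (u0 * u0 * A) * (He n v * Real.exp (-(v^2/2))))) :=
    ((intXXHe_int n).const_mul _).add
      (((intXHe_int n).const_mul _).add ((intHe_int n).const_mul _))
  have h2 := integrable_shift_scale hW u0 hs
  have hA : (fun t : ℝ => t^2 * G θ n u0 t) = fun t : ℝ =>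
      (fun v => (Real.sqrt θ * Real.sqrt θ * A) * (v^2 * He n v * Real.exp (-(v^2/2)))
        + ((2 * Real.sqrt θ * u0 * A) * (v * He n v * Real.exp (-(v^2/2)))
        + (u0 * u0 * A) * (He n v * Real.exp (-(v^2/2))))) ((t - u0) / Real.sqrt θ) := by
    funext t
    simp only [G, ← hAdef]
    rw [neg_div]
    field_simp
    ring
  rw [hA]
  exact h2

lemma delta_prod {D : ℕ} (α : Fin D → ℕ) (i : Fin D) (k : ℕ) :
    (if α i = k then (1:ℝ) else 0) * ∏ d ∈ Finset.univ.erase i, (if α d = 0 then (1:ℝ) else 0)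
      = if α = (fun j => if j = i then k else 0) then 1 else 0 := by
  by_cases h : α = fun j => if j = i then k else 0
  · subst h
    rw [if_pos rfl, if_pos (by simp), Finset.prod_congr rfl
      (fun d hd => by rw [if_pos (by simp [Finset.ne_of_mem_erase hd])]), Finset.prod_const_one,
      mul_one]
  · rw [if_neg h]
    by_cases hi : α i = k
    · have hex : ∃ d, d ≠ i ∧ α d ≠ 0 := by
        by_contra hc
        push_neg at hc
        refine h (funext fun j => ?_)
        by_cases hj : j = i
        · rw [hj, if_pos rfl, hi]
        · rw [if_neg hj]
          exact hc j hj
      obtain ⟨d, hd, hd0⟩ := hex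
      rw [Finset.prod_eq_zero (f := fun d => if α d = 0 then (1:ℝ) else 0)
        (Finset.mem_erase.2 ⟨hd, Finset.mem_univ d⟩) (if_neg hd0), mul_zero]
    · rw [if_neg hi, zero_mul]

lemma prod_int0 {D : ℕ} {θ' : ℝ} (hθ' : 0 < θ') (u' : Fin D → ℝ) (α : Fin D → ℕ) :
    ∫ ξ : Fin D → ℝ, ∏ d, G θ' (α d) (u' d) (ξ d)
      = if α = (fun _ => 0) then 1 else 0 := by
  rw [MeasureTheory.integral_fintype_prod_volume_eq_prod (fun d => G θ' (α d) (u' d)),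
    Finset.prod_congr rfl (fun d _ => Gint0 hθ' (α d) (u' d)), Finset.prod_boole]
  by_cases h : α = fun _ => 0
  · rw [if_pos (fun i _ => by simp [h]), if_pos h]
  · rw [if_neg h, if_neg (fun hall => h (funext fun j => hall j (Finset.mem_univ j)))]

lemma hsplit1 (n : ℕ) (u0 : ℝ) :
    (if n = 0 then u0 else if n = 1 then (1:ℝ) else 0)
      = u0 * (if n = 0 then 1 else 0) + (if n = 1 then 1 else 0) := by
  by_cases h0 : n = 0
  · simp [h0]
  by_cases h1 : n = 1
  · simp [h0, h1]
  · simp [h0, h1]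

lemma hsplit2 (n : ℕ) (u0 θ' : ℝ) :
    (if n = 0 then u0^2 + θ' else if n = 1 then 2*u0 else if n = 2 then (2:ℝ) else 0)
      = (u0^2 + θ') * (if n = 0 then 1 else 0) + (2*u0) * (if n = 1 then 1 else 0)
        + 2 * (if n = 2 then 1 else 0) := by
  by_cases h0 : n = 0
  · simp [h0]
  by_cases h1 : n = 1
  · simp [h0, h1]
  by_cases h2 : n = 2
  · simp [h0, h1, h2]
  · simp [h0, h1, h2]

lemma prodF_eq {D : ℕ} (θ' : ℝ) (u' : Fin D → ℝ) (α : Fin D → ℕ) (i : Fin D)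
    (W : ℝ → ℝ) (ξ : Fin D → ℝ) :
    (∏ d, (if d = i then (fun t => W t * G θ' (α d) (u' d) t)
        else G θ' (α d) (u' d)) (ξ d))
      = W (ξ i) * ∏ d, G θ' (α d) (u' d) (ξ d) := by
  have key : ∀ d ∈ Finset.univ.erase i,
      (if d = i then (fun t => W t * G θ' (α d) (u' d) t)
        else G θ' (α d) (u' d)) (ξ d) = G θ' (α d) (u' d) (ξ d) := by
    intro d hd
    rw [if_neg (Finset.ne_of_mem_erase hd)]
  rw [← Finset.prod_erase_mul Finset.univ _ (Finset.mem_univ i),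
     ← Finset.prod_erase_mul Finset.univ
       (fun d => G θ' (α d) (u' d) (ξ d)) (Finset.mem_univ i),
     Finset.prod_congr (rfl : Finset.univ.erase i = Finset.univ.erase i) key, if_pos rfl]
  ring

lemma prodF_int {D : ℕ} {θ' : ℝ} (hθ' : 0 < θ') (u' : Fin D → ℝ) (α : Fin D → ℕ) (i : Fin D)
    (W : ℝ → ℝ) (hW : ∀ n u0, Integrable (fun t => W t * G θ' n u0 t)) :
    Integrable (fun ξ : Fin D → ℝ => ∏ d, (if d = i then (fun t => W t * G θ' (α d) (u' d) t)
        else G θ' (α d) (u' d)) (ξ d)) := by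
  refine Integrable.fintype_prod (f := fun d => (if d = i then
    (fun t => W t * G θ' (α d) (u' d) t) else G θ' (α d) (u' d))) (fun d => ?_)
  by_cases hd : d = i
  · simp only [if_pos hd]; exact hW _ _
  · simp only [if_neg hd]; exact G_int hθ' _ _

lemma prodF_integral {D : ℕ} {θ' : ℝ} (hθ' : 0 < θ') (u' : Fin D → ℝ) (α : Fin D → ℕ)
    (i : Fin D) (W : ℝ → ℝ)
    (hval : ∫ t : ℝ, W t * G θ' (α i) (u' i) t = Wv) :
    ∫ ξ : Fin D → ℝ, ∏ d, (if d = i then (fun t => W t * G θ' (α d) (u' d) t)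
        else G θ' (α d) (u' d)) (ξ d)
      = (∏ d ∈ Finset.univ.erase i, (if α d = 0 then (1:ℝ) else 0)) * Wv := by
  have key : ∀ d ∈ Finset.univ.erase i,
      (∫ t, (if d = i then (fun t => W t * G θ' (α d) (u' d) t)
        else G θ' (α d) (u' d)) t) = if α d = 0 then (1:ℝ) else 0 := by
    intro d hd
    rw [if_neg (Finset.ne_of_mem_erase hd)]
    exact Gint0 hθ' _ _
  rw [MeasureTheory.integral_fintype_prod_volume_eq_prod (fun d => (if d = i then
    (fun t => W t * G θ' (α d) (u' d) t) else G θ' (α d) (u' d)))]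
  rw [← Finset.prod_erase_mul Finset.univ _ (Finset.mem_univ i),
    Finset.prod_congr (rfl : Finset.univ.erase i = Finset.univ.erase i) key, if_pos rfl, hval]

lemma prod_int1 {D : ℕ} {θ' : ℝ} (hθ' : 0 < θ') (u' : Fin D → ℝ) (α : Fin D → ℕ) (i : Fin D) :
    ∫ ξ : Fin D → ℝ, ξ i * ∏ d, G θ' (α d) (u' d) (ξ d)
      = u' i * (if α = (fun _ => 0) then 1 else 0)
        + (if α = (fun j => if j = i then 1 else 0) then 1 else 0) := by
  have hF : (fun ξ : Fin D → ℝ => ξ i * ∏ d, G θ' (α d) (u' d) (ξ d))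
      = fun ξ => ∏ d, (if d = i then (fun t => t * G θ' (α d) (u' d) t)
          else G θ' (α d) (u' d)) (ξ d) := by
    funext ξ
    exact (prodF_eq θ' u' α i (fun t => t) ξ).symm
  rw [hF, prodF_integral hθ' u' α i (fun t => t) (Gint1 hθ' (α i) (u' i)), hsplit1]
  rw [show (∏ d ∈ Finset.univ.erase i, (if α d = 0 then (1:ℝ) else 0)) *
      (u' i * (if α i = 0 then 1 else 0) + (if α i = 1 then 1 else 0))
    = u' i * ((if α i = 0 then (1:ℝ) else 0) *
        ∏ d ∈ Finset.univ.erase i, (if α d = 0 then (1:ℝ) else 0))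
      + ((if α i = 1 then (1:ℝ) else 0) *
        ∏ d ∈ Finset.univ.erase i, (if α d = 0 then (1:ℝ) else 0)) from by ring]
  rw [delta_prod α i 0, delta_prod α i 1]
  simp only [ite_self]

lemma prod_int2 {D : ℕ} {θ' : ℝ} (hθ' : 0 < θ') (u' : Fin D → ℝ) (α : Fin D → ℕ) (i : Fin D) :
    ∫ ξ : Fin D → ℝ, (ξ i)^2 * ∏ d, G θ' (α d) (u' d) (ξ d)
      = ((u' i)^2 + θ') * (if α = (fun _ => 0) then 1 else 0)
        + 2 * u' i * (if α = (fun j => if j = i then 1 else 0) then 1 else 0)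
        + 2 * (if α = (fun j => if j = i then 2 else 0) then 1 else 0) := by
  have hF : (fun ξ : Fin D → ℝ => (ξ i)^2 * ∏ d, G θ' (α d) (u' d) (ξ d))
      = fun ξ => ∏ d, (if d = i then (fun t => t^2 * G θ' (α d) (u' d) t)
          else G θ' (α d) (u' d)) (ξ d) := by
    funext ξ
    exact (prodF_eq θ' u' α i (fun t => t^2) ξ).symm
  rw [hF, prodF_integral hθ' u' α i (fun t => t^2) (Gint2 hθ' (α i) (u' i)), hsplit2]
  rw [show (∏ d ∈ Finset.univ.erase i, (if α d = 0 then (1:ℝ) else 0)) *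
      (((u' i)^2 + θ') * (if α i = 0 then 1 else 0) + (2 * u' i) * (if α i = 1 then 1 else 0)
        + 2 * (if α i = 2 then 1 else 0))
    = ((u' i)^2 + θ') * ((if α i = 0 then (1:ℝ) else 0) *
        ∏ d ∈ Finset.univ.erase i, (if α d = 0 then (1:ℝ) else 0))
      + 2 * u' i * ((if α i = 1 then (1:ℝ) else 0) *
        ∏ d ∈ Finset.univ.erase i, (if α d = 0 then (1:ℝ) else 0))
      + 2 * ((if α i = 2 then (1:ℝ) else 0) *
        ∏ d ∈ Finset.univ.erase i, (if α d = 0 then (1:ℝ) else 0)) from by ring]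
  rw [delta_prod α i 0, delta_prod α i 1, delta_prod α i 2]
  simp only [ite_self]

lemma mem_multiIndices' {D M : ℕ} (α : Fin D → ℕ) (h : (∑ d, α d) ≤ M) :
    α ∈ multiIndices D M := by
  rw [multiIndices, Finset.mem_filter]
  refine ⟨?_, h⟩
  rw [Finset.mem_image]
  refine ⟨fun d => ⟨α d, ?_⟩, Finset.mem_univ _, rfl⟩
  have h2 : α d ≤ ∑ d', α d' :=
    Finset.single_le_sum (f := α) (fun _ _ => Nat.zero_le _) (Finset.mem_univ d)
  omega

lemma sum_pick {D : ℕ} {S : Finset (Fin D → ℕ)} {β : Fin D → ℕ} (hβ : β ∈ S)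
    (c : (Fin D → ℕ) → ℝ) (A : ℝ) :
    ∑ α ∈ S, c α * (A * (if α = β then 1 else 0)) = A * c β := by
  rw [Finset.sum_eq_single β]
  · simp [mul_comm]
  · intro b _ hb
    simp [hb]
  · intro h
    exact absurd hβ h


/-- macroscopic quantities of a truncated Hermite expansion around
`(u',θ')`: `ρ = f₀`, `ρu = ρu' + (f_{e_d})_d`, and
`ρ|u|² + Dρθ = 2ρ u·u' − ρ|u'|² + Σ_d (θ' f₀ + 2 f_{2e_d})`. -/
theorem stmt12 (D M : ℕ) (hD : 1 ≤ D) (hM : 2 ≤ M)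
    (u' : Fin D → ℝ) (θ' : ℝ) (hθ' : 0 < θ')
    (c : (Fin D → ℕ) → ℝ) (f : (Fin D → ℝ) → ℝ)
    (hf : f = fun ξ => ∑ α ∈ multiIndices D M,
      c α * Hb θ' α (fun d => (ξ d - u' d) / Real.sqrt θ'))
    (ρ : ℝ) (u : Fin D → ℝ) (θ : ℝ)
    (hρ : ρ = ∫ ξ, f ξ)
    (hu : ∀ i, ρ * u i = ∫ ξ, ξ i * f ξ)
    (hθ : ρ * (∑ i, (u i) ^ 2) + D * ρ * θ = ∫ ξ, (∑ i, (ξ i) ^ 2) * f ξ) :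
    ρ = c (fun _ => 0) ∧
    (∀ i : Fin D, ρ * u i = ρ * u' i + c (fun k => if k = i then 1 else 0)) ∧
    ρ * (∑ i, (u i) ^ 2) + D * ρ * θ =
      2 * ρ * (∑ i, u i * u' i) - ρ * (∑ i, (u' i) ^ 2) +
        ∑ d : Fin D, (θ' * c (fun _ => 0) + 2 * c (fun k => if k = d then 2 else 0)) := by
  have hmem0 : (fun _ => 0 : Fin D → ℕ) ∈ multiIndices D M := mem_multiIndices' _ (by simp)
  have hmem1 : ∀ i : Fin D, (fun k => if k = i then 1 else 0) ∈ multiIndices D M := by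
    intro i
    apply mem_multiIndices'
    have h : (∑ d : Fin D, if d = i then 1 else 0) = 1 := by simp
    omega
  have hmem2 : ∀ i : Fin D, (fun k => if k = i then 2 else 0) ∈ multiIndices D M := by
    intro i
    apply mem_multiIndices'
    have h : (∑ d : Fin D, if d = i then 2 else 0) = 2 := by simp
    omega
  have hfG : f = fun ξ => ∑ α ∈ multiIndices D M,
      c α * ∏ d, G θ' (α d) (u' d) (ξ d) := by
    rw [hf]; rfl
  have hint0 : ∀ α : Fin D → ℕ,
      Integrable (fun ξ : Fin D → ℝ => c α * ∏ d, G θ' (α d) (u' d) (ξ d)) :=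
    fun α => (Integrable.fintype_prod (f := fun d => G θ' (α d) (u' d))
      (fun d => G_int hθ' _ _)).const_mul _
  have hint1 : ∀ (i : Fin D) (α : Fin D → ℕ),
      Integrable (fun ξ : Fin D → ℝ => c α * (ξ i * ∏ d, G θ' (α d) (u' d) (ξ d))) := by
    intro i α
    have h := (prodF_int hθ' u' α i (fun t => t) (fun n u0 => G1_int hθ' n u0)).const_mul (c α)
    have he : (fun ξ : Fin D → ℝ => c α * ∏ d, (if d = i then
        (fun t => (fun t : ℝ => t) t * G θ' (α d) (u' d) t)
        else G θ' (α d) (u' d)) (ξ d))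
        = fun ξ => c α * (ξ i * ∏ d, G θ' (α d) (u' d) (ξ d)) :=
      funext fun ξ => by rw [prodF_eq]
    rwa [he] at h
  have hint2 : ∀ (i : Fin D) (α : Fin D → ℕ),
      Integrable (fun ξ : Fin D → ℝ => c α * ((ξ i)^2 * ∏ d, G θ' (α d) (u' d) (ξ d))) := by
    intro i α
    have h := (prodF_int hθ' u' α i (fun t => t^2) (fun n u0 => G2_int hθ' n u0)).const_mul (c α)
    have he : (fun ξ : Fin D → ℝ => c α * ∏ d, (if d = i then
        (fun t => (fun t : ℝ => t^2) t * G θ' (α d) (u' d) t)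
        else G θ' (α d) (u' d)) (ξ d))
        = fun ξ => c α * ((ξ i)^2 * ∏ d, G θ' (α d) (u' d) (ξ d)) :=
      funext fun ξ => by rw [prodF_eq]
    rwa [he] at h
  have h1 : ρ = c (fun _ => 0) := by
    rw [hρ, hfG, MeasureTheory.integral_finset_sum _ (fun α _ => hint0 α)]
    have hperα : ∀ α ∈ multiIndices D M,
        (∫ ξ : Fin D → ℝ, c α * ∏ d, G θ' (α d) (u' d) (ξ d))
          = c α * ((1:ℝ) * (if α = (fun _ => 0) then 1 else 0)) := by
      intro α _
      rw [MeasureTheory.integral_const_mul, prod_int0 hθ' u' α, one_mul]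
    rw [Finset.sum_congr rfl hperα, sum_pick hmem0 c 1, one_mul]
  have h2 : ∀ i : Fin D, ρ * u i = ρ * u' i + c (fun k => if k = i then 1 else 0) := by
    intro i
    rw [hu i]
    have hfun : (fun ξ : Fin D → ℝ => ξ i * f ξ) = fun ξ => ∑ α ∈ multiIndices D M,
        c α * (ξ i * ∏ d, G θ' (α d) (u' d) (ξ d)) := by
      funext ξ
      simp only [hfG]
      rw [Finset.mul_sum]
      exact Finset.sum_congr rfl fun α _ => by ring
    rw [hfun, MeasureTheory.integral_finset_sum _ (fun α _ => hint1 i α)]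
    have hperα : ∀ α ∈ multiIndices D M,
        (∫ ξ : Fin D → ℝ, c α * (ξ i * ∏ d, G θ' (α d) (u' d) (ξ d)))
          = c α * (u' i * (if α = (fun _ => 0) then 1 else 0))
            + c α * ((1:ℝ) * (if α = (fun k => if k = i then 1 else 0) then 1 else 0)) := by
      intro α _
      rw [MeasureTheory.integral_const_mul, prod_int1 hθ' u' α i]
      ring
    rw [Finset.sum_congr rfl hperα, Finset.sum_add_distrib, sum_pick hmem0 c (u' i),
      sum_pick (hmem1 i) c 1, one_mul, h1]
    ring
  refine ⟨h1, h2, ?_⟩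
  have h3 : ∀ i : Fin D, (∫ ξ : Fin D → ℝ, (ξ i)^2 * f ξ)
      = ((u' i)^2 + θ') * c (fun _ => 0) + 2 * u' i * c (fun k => if k = i then 1 else 0)
        + 2 * c (fun k => if k = i then 2 else 0) := by
    intro i
    have hfun : (fun ξ : Fin D → ℝ => (ξ i)^2 * f ξ) = fun ξ => ∑ α ∈ multiIndices D M,
        c α * ((ξ i)^2 * ∏ d, G θ' (α d) (u' d) (ξ d)) := by
      funext ξ
      simp only [hfG]
      rw [Finset.mul_sum]
      exact Finset.sum_congr rfl fun α _ => by ring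
    rw [hfun, MeasureTheory.integral_finset_sum _ (fun α _ => hint2 i α)]
    have hperα : ∀ α ∈ multiIndices D M,
        (∫ ξ : Fin D → ℝ, c α * ((ξ i)^2 * ∏ d, G θ' (α d) (u' d) (ξ d)))
          = c α * (((u' i)^2 + θ') * (if α = (fun _ => 0) then 1 else 0))
            + (c α * ((2 * u' i) * (if α = (fun k => if k = i then 1 else 0) then 1 else 0))
            + c α * ((2:ℝ) * (if α = (fun k => if k = i then 2 else 0) then 1 else 0))) := by
      intro α _
      rw [MeasureTheory.integral_const_mul, prod_int2 hθ' u' α i]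
      ring
    rw [Finset.sum_congr rfl hperα, Finset.sum_add_distrib, Finset.sum_add_distrib,
      sum_pick hmem0 c _, sum_pick (hmem1 i) c _, sum_pick (hmem2 i) c _]
    ring
  have hintI : ∀ i : Fin D, Integrable (fun ξ : Fin D → ℝ => (ξ i)^2 * f ξ) := by
    intro i
    have hfun : (fun ξ : Fin D → ℝ => (ξ i)^2 * f ξ) = fun ξ => ∑ α ∈ multiIndices D M,
        c α * ((ξ i)^2 * ∏ d, G θ' (α d) (u' d) (ξ d)) := by
      funext ξ
      simp only [hfG]
      rw [Finset.mul_sum]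
      exact Finset.sum_congr rfl fun α _ => by ring
    rw [hfun]
    exact integrable_finset_sum _ fun α _ => hint2 i α
  have hK : (fun ξ : Fin D → ℝ => (∑ i, (ξ i)^2) * f ξ) = fun ξ => ∑ i, (ξ i)^2 * f ξ := by
    funext ξ
    rw [Finset.sum_mul]
  rw [hθ, hK, MeasureTheory.integral_finset_sum _ (fun i _ => hintI i),
    Finset.sum_congr rfl (fun i _ => h3 i)]
  have hR : 2 * ρ * (∑ i, u i * u' i)
      = ∑ i, 2 * (ρ * u' i + c (fun k => if k = i then 1 else 0)) * u' i := by
    rw [Finset.mul_sum]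
    exact Finset.sum_congr rfl fun i _ => by
      rw [show 2 * ρ * (u i * u' i) = 2 * (ρ * u i) * u' i by ring, h2 i]
  have hL : ρ * (∑ i, (u' i)^2) = ∑ i, ρ * (u' i)^2 := Finset.mul_sum _ _ _
  rw [hR, hL, ← Finset.sum_sub_distrib, ← Finset.sum_add_distrib]
  refine Finset.sum_congr rfl fun i _ => ?_
  rw [h1]
  ring
end

section
/- Let D ≥ 1, θ₁ > 0, θ̂ > 0, w, v ∈ ℝ^D, and define A(v,w,τ) ∈ ℝ^D componentwise by A_d = [(θ̂−1)τ+1] v_d + w_d τ, R(τ) = (θ̂−1)/((θ̂−1)τ+1) and S(τ) = 1/((θ̂−1)τ+1) for τ ∈ [0,1]. Let {F_α}_{α ∈ ℕ^D} be a family of differentiable functions [0,1] → ℝ that is zero for all but finitely many α, and set F(v,τ) = Σ_{α} F_α(τ) S(τ)^{−(|α|+D)} 𝓗_{θ₁,α}(A(v,w,τ)). Then for all τ ∈ [0,1], ∂F/∂τ (v,τ) = Σ_{α} S(τ)^{−(|α|+D)} 𝓗_{θ₁,α}(A(v,w,τ)) · { F_α'(τ) − Σ_{d=1}^D S(τ)²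 [ θ₁ R(τ) F_{α−2e_d}(τ) + w_d √θ₁ F_{α−e_d}(τ) ] }, where F_β is taken to be identically zero whenever β has a negative component. -/
open MeasureTheory

open Polynomial in
lemma aux_derivative_hermite (n : ℕ) :
    derivative (hermite (n+1)) = C ((n:ℤ)+1) * hermite n := by
  induction n with
  | zero => simp [hermite_one, hermite_zero]
  | succ n ih =>
    have hC : C ((n:ℤ)+1+1) = C ((n:ℤ)+1) + 1 := by rw [map_add, map_one]
    rw [hermite_succ (n+1), derivative_sub, derivative_mul, derivative_X, one_mul, ih,
      derivative_mul, derivative_C, zero_mul, zero_add]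
    push_cast
    rw [hC, hermite_succ n]
    ring

lemma aux_He_succ (n : ℕ) (x : ℝ) :
    He (n+1) x = x * He n x - Polynomial.aeval x (Polynomial.derivative (Polynomial.hermite n)) := by
  unfold He
  rw [Polynomial.hermite_succ]
  simp

lemma aux_He_rec (n : ℕ) (x : ℝ) :
    He (n+2) x = x * He (n+1) x - ((n:ℝ)+1) * He n x := by
  rw [show n+2 = (n+1)+1 from rfl, aux_He_succ (n+1) x, aux_derivative_hermite n]
  unfold He
  simp [mul_comm]

noncomputable def phif (θ : ℝ) (n : ℕ) (x : ℝ) : ℝ :=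
  (Real.sqrt (2 * Real.pi))⁻¹ * θ ^ (-(((n : ℝ) + 1) / 2)) * He n x * Real.exp (-x ^ 2 / 2)

lemma aux_pow1 {θ : ℝ} (hθ : 0 < θ) (n : ℕ) :
    Real.sqrt θ * θ ^ (-((((n+1 : ℕ) : ℝ) + 1) / 2)) = θ ^ (-(((n : ℝ) + 1) / 2)) := by
  rw [Real.sqrt_eq_rpow, ← Real.rpow_add hθ]
  congr 1
  push_cast
  ring

lemma aux_pow2 {θ : ℝ} (hθ : 0 < θ) (n : ℕ) :
    θ * θ ^ (-((((n+2 : ℕ) : ℝ) + 1) / 2)) = θ ^ (-(((n : ℝ) + 1) / 2)) := by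
  nth_rewrite 1 [← Real.rpow_one θ]
  rw [← Real.rpow_add hθ]
  congr 1
  push_cast
  ring

lemma aux_phi_rec {θ : ℝ} (hθ : 0 < θ) (n : ℕ) (x : ℝ) :
    θ * phif θ (n+2) x = Real.sqrt θ * x * phif θ (n+1) x - ((n : ℝ) + 1) * phif θ n x := by
  have h1 := aux_pow1 hθ n
  have h2 := aux_pow2 hθ n
  unfold phif
  rw [aux_He_rec n x]
  linear_combination ((Real.sqrt (2 * Real.pi))⁻¹ * (x * He (n+1) x - ((n:ℝ)+1) * He n x)
      * Real.exp (-x ^ 2 / 2)) * h2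
    + (-((Real.sqrt (2 * Real.pi))⁻¹ * x * He (n+1) x * Real.exp (-x ^ 2 / 2))) * h1

lemma aux_phi_deriv {θ : ℝ} (hθ : 0 < θ) (n : ℕ) (x : ℝ) :
    HasDerivAt (phif θ n) (-(Real.sqrt θ) * phif θ (n+1) x) x := by
  have hHe : HasDerivAt (fun y : ℝ => He n y)
      (Polynomial.aeval x (Polynomial.derivative (Polynomial.hermite n))) x :=
    (Polynomial.hermite n).hasDerivAt_aeval x
  have hexp : HasDerivAt (fun y : ℝ => Real.exp (-y ^ 2 / 2))
      (-x * Real.exp (-x ^ 2 / 2)) x := by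
    have h0 : HasDerivAt (fun y : ℝ => -y ^ 2 / 2) (-x) x := by
      exact (((hasDerivAt_pow 2 x).neg).div_const 2).congr_deriv (by push_cast; ring)
    simpa [mul_comm] using h0.exp
  have hmul := (hHe.mul hexp).const_mul
      ((Real.sqrt (2 * Real.pi))⁻¹ * θ ^ (-(((n : ℝ) + 1) / 2)))
  have heq : (fun y => (Real.sqrt (2 * Real.pi))⁻¹ * θ ^ (-(((n : ℝ) + 1) / 2)) *
      (He n y * Real.exp (-y ^ 2 / 2))) = phif θ n := by
    funext y; unfold phif; ring
  simp only [Pi.mul_apply] at hmul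
  rw [heq] at hmul
  refine hmul.congr_deriv ?_
  symm
  have h1 := aux_pow1 hθ n
  have hsucc := aux_He_succ n x
  unfold phif
  linear_combination (-((Real.sqrt (2*Real.pi))⁻¹ * He (n+1) x * Real.exp (-x ^ 2 / 2))) * h1
    - ((Real.sqrt (2*Real.pi))⁻¹ * θ ^ (-(((n : ℝ) + 1) / 2)) * Real.exp (-x ^ 2 / 2)) * hsucc

/-- index shift: `α + m·e_d` -/
def shiftm {D : ℕ} (m : ℕ) (d : Fin D) (β : Fin D → ℕ) : Fin D → ℕ :=
  fun i => β i + if i = d then m else 0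

def kk {D : ℕ} (α : Fin D → ℕ) : ℕ := (∑ d, α d) + D

noncomputable def prodphi {D : ℕ} (θ₁ θh : ℝ) (w v : Fin D → ℝ) (τ : ℝ) (α : Fin D → ℕ) : ℝ :=
  ∏ d, phif θ₁ (α d) (((θh-1)*τ+1) * v d + w d * τ)

noncomputable def GDf {D : ℕ} (θ₁ θh : ℝ) (w v : Fin D → ℝ) (τ : ℝ) (α : Fin D → ℕ) : ℝ :=
  -∑ d : Fin D,
      (θ₁ * (θh-1) * ((θh-1)*τ+1) ^ (kk α - 1) * prodphi θ₁ θh w v τ (shiftm 2 d α)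
       + w d * Real.sqrt θ₁ * ((θh-1)*τ+1) ^ (kk α - 1) * prodphi θ₁ θh w v τ (shiftm 1 d α))

lemma aux_Hb_eq {D : ℕ} (θ₁ θh : ℝ) (w v : Fin D → ℝ) (t : ℝ) (α : Fin D → ℕ) :
    Hb θ₁ α (fun d => ((θh - 1) * t + 1) * v d + w d * t) = prodphi θ₁ θh w v t α := rfl

lemma aux_zpow (a : ℝ) (m D : ℕ) : (1/a) ^ (-((m:ℤ) + (D:ℤ))) = a ^ (m + D) := by
  rw [one_div, inv_zpow, zpow_neg, inv_inv,
    show ((m:ℤ) + (D:ℤ)) = ((m + D : ℕ) : ℤ) by push_cast; ring, zpow_natCast]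

lemma aux_prod_shift {D : ℕ} (θ₁ : ℝ) (α : Fin D → ℕ) (x : Fin D → ℝ) (d : Fin D) (m : ℕ) :
    ∏ j, phif θ₁ ((fun i => α i + if i = d then m else 0) j) (x j)
      = phif θ₁ (α d + m) (x d) * ∏ j ∈ Finset.univ.erase d, phif θ₁ (α j) (x j) := by
  rw [← Finset.mul_prod_erase Finset.univ _ (Finset.mem_univ d)]
  congr 1
  · simp
  · refine Finset.prod_congr rfl fun j hj => ?_
    rw [Finset.mem_erase] at hj
    simp [hj.1]

lemma aux_G_deriv {D : ℕ} (hD : 1 ≤ D) {θ₁ : ℝ} (hθ₁ : 0 < θ₁) (θh : ℝ)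
    (w v : Fin D → ℝ) (α : Fin D → ℕ) (τ : ℝ) :
    HasDerivAt
      (fun t => ((θh-1)*t+1) ^ (kk α) * prodphi θ₁ θh w v t α)
      (GDf θ₁ θh w v τ α) τ := by
  simp only [GDf, prodphi, shiftm]
  set k := kk α with hk0
  have hk : k = (∑ d, α d) + D := rfl
  set x : Fin D → ℝ := fun d => ((θh-1)*τ+1) * v d + w d * τ with hx
  have hP : HasDerivAt (fun t : ℝ => (θh-1)*t+1) (θh-1) τ := by
    simpa using ((hasDerivAt_id τ).const_mul (θh-1)).add_const 1
  have hPk : HasDerivAt (fun t : ℝ => ((θh-1)*t+1) ^ k)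
      ((k:ℝ) * ((θh-1)*τ+1) ^ (k-1) * (θh-1)) τ := hP.pow k
  have hA : ∀ d : Fin D, HasDerivAt (fun t : ℝ => ((θh-1)*t+1) * v d + w d * t)
      ((θh-1) * v d + w d) τ := by
    intro d
    have := (hP.mul_const (v d)).add ((hasDerivAt_id τ).const_mul (w d))
    exact this.congr_deriv (by simp)
  have hfac : ∀ d : Fin D, HasDerivAt (fun t => phif θ₁ (α d) (((θh-1)*t+1) * v d + w d * t))
      (-(Real.sqrt θ₁) * phif θ₁ (α d + 1) (x d) * ((θh-1) * v d + w d)) τ := by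
    intro d
    have := (aux_phi_deriv hθ₁ (α d) (x d)).comp τ (hA d)
    simpa [Function.comp_def] using this
  have hprod := HasDerivAt.fun_finsetProd (u := Finset.univ)
    (f := fun d t => phif θ₁ (α d) (((θh-1)*t+1) * v d + w d * t))
    (f' := fun d => -(Real.sqrt θ₁) * phif θ₁ (α d + 1) (x d) * ((θh-1) * v d + w d))
    (fun d _ => hfac d)
  have htot := hPk.mul hprod
  refine htot.congr_deriv ?_
  symm
  have hpow : ((θh-1)*τ+1) ^ k = ((θh-1)*τ+1) ^ (k-1) * ((θh-1)*τ+1) := by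
    rw [← pow_succ]
    congr 1
    have : 1 ≤ k := by rw [hk]; omega
    omega
  have hkd : (k:ℝ) = ∑ d : Fin D, ((α d : ℝ) + 1) := by
    rw [hk]
    push_cast
    rw [Finset.sum_add_distrib]
    simp [Finset.card_univ]
  simp only [smul_eq_mul]
  rw [hkd, Finset.sum_mul, Finset.sum_mul, Finset.sum_mul, Finset.mul_sum,
    ← Finset.sum_add_distrib, ← Finset.sum_neg_distrib]
  refine Finset.sum_congr rfl fun d _ => ?_
  rw [aux_prod_shift θ₁ α x d 2, aux_prod_shift θ₁ α x d 1,
    ← Finset.mul_prod_erase Finset.univ (fun j => phif θ₁ (α j) (x j)) (Finset.mem_univ d),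
    hpow]
  have hrec := aux_phi_rec hθ₁ (α d) (x d)
  rw [show α d + 2 = α d + 1 + 1 from rfl] at hrec ⊢
  push_cast at hrec ⊢
  linear_combination (-((θh-1) * ((θh-1)*τ+1) ^ (k-1) *
    ∏ j ∈ Finset.univ.erase d, phif θ₁ (α j) (x j))) * hrec
/-- for `F(v,τ) = Σ_α F_α(τ) S(τ)^{−(|α|+D)} 𝓗_{θ₁,α}(A(v,w,τ))` (the sum
being finitely supported),
`∂F/∂τ = Σ_α S^{−(|α|+D)} 𝓗_{θ₁,α}(A) {F_α' − Σ_d S²[θ₁ R F_{α−2e_d} + w_d √θ₁ F_{α−e_d}]}`,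
with `F_β ≡ 0` whenever `β` has a negative component. -/
theorem stmt16 (D : ℕ) (hD : 1 ≤ D) (θ₁ : ℝ) (hθ₁ : 0 < θ₁) (θh : ℝ) (hθh : 0 < θh)
    (w v : Fin D → ℝ)
    (A : ℝ → Fin D → ℝ)
    (hA : ∀ τ, A τ = fun d => ((θh - 1) * τ + 1) * v d + w d * τ)
    (R S : ℝ → ℝ)
    (hR : ∀ τ, R τ = (θh - 1) / ((θh - 1) * τ + 1))
    (hS : ∀ τ, S τ = 1 / ((θh - 1) * τ + 1))
    (F F' : (Fin D → ℕ) → ℝ → ℝ)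
    (hsupp : {α : Fin D → ℕ | F α ≠ 0}.Finite)
    (hderiv : ∀ α : Fin D → ℕ, ∀ τ ∈ Set.Icc (0 : ℝ) 1,
      HasDerivWithinAt (F α) (F' α τ) (Set.Icc (0 : ℝ) 1) τ) :
    ∀ τ ∈ Set.Icc (0 : ℝ) 1,
      HasDerivWithinAt
        (fun t => ∑ᶠ α : Fin D → ℕ,
          F α t * S t ^ (-(((∑ d, α d : ℕ) : ℤ) + (D : ℤ))) * Hb θ₁ α (A t))
        (∑ᶠ α : Fin D → ℕ,
          S τ ^ (-(((∑ d, α d : ℕ) : ℤ) + (D : ℤ))) * Hb θ₁ α (A τ) *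
            (F' α τ - ∑ d : Fin D, S τ ^ 2 *
              (θ₁ * R τ *
                  (if 2 ≤ α d then F (fun i => α i - (if i = d then 2 else 0)) τ else 0)
                + w d * Real.sqrt θ₁ *
                  (if 1 ≤ α d then F (fun i => α i - (if i = d then 1 else 0)) τ else 0))))
        (Set.Icc (0 : ℝ) 1) τ := by
  classical
  intro τ hτ
  obtain ⟨hτ0, hτ1⟩ := hτ
  have hPτ : 0 < (θh - 1) * τ + 1 := by
    rcases lt_or_ge τ 1 with h | h
    · nlinarith [mul_nonneg hθh.le hτ0]
    · have : τ = 1 := le_antisymm hτ1 h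
      subst this; linarith
  have hPne : ((θh - 1) * τ + 1) ≠ 0 := ne_of_gt hPτ
  set suppT : Finset (Fin D → ℕ) := hsupp.toFinset with hsuppT
  set T : Finset (Fin D → ℕ) := suppT ∪ (Finset.univ : Finset (Fin D)).biUnion
      (fun d => suppT.image (shiftm 1 d) ∪ suppT.image (shiftm 2 d)) with hT
  have hsubT : suppT ⊆ T := Finset.subset_union_left
  have him : ∀ (m : ℕ) (d : Fin D), m = 1 ∨ m = 2 → suppT.image (shiftm m d) ⊆ T := by
    intro m d hm x hx
    refine Finset.mem_union_right _ (Finset.mem_biUnion.2 ⟨d, Finset.mem_univ d, ?_⟩)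
    rcases hm with h | h <;> subst h
    · exact Finset.mem_union_left _ hx
    · exact Finset.mem_union_right _ hx
  have hmem : ∀ α : Fin D → ℕ, α ∈ suppT ↔ F α ≠ 0 := fun α => hsupp.mem_toFinset
  have hFzero : ∀ α : Fin D → ℕ, α ∉ suppT → ∀ t, F α t = 0 := by
    intro α hα t
    have : F α = 0 := by
      by_contra h
      exact hα ((hmem α).2 h)
    rw [this]
    rfl
  have hF'zero : ∀ α : Fin D → ℕ, α ∉ suppT → F' α τ = 0 := by
    intro α hα
    have hu : UniqueDiffWithinAt ℝ (Set.Icc (0:ℝ) 1) τ :=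
      (uniqueDiffOn_Icc one_pos) τ ⟨hτ0, hτ1⟩
    have h1 := (hderiv α τ ⟨hτ0, hτ1⟩).derivWithin hu
    have h2 : HasDerivWithinAt (F α) 0 (Set.Icc (0:ℝ) 1) τ := by
      have hz : F α = fun _ => 0 := funext fun t => hFzero α hα t
      rw [hz]
      exact hasDerivWithinAt_const τ _ 0
    rw [← h1, h2.derivWithin hu]
  have hkk1 : ∀ α : Fin D → ℕ, 1 ≤ kk α := fun α => le_trans hD (Nat.le_add_left D _)
  have hkshift : ∀ (m : ℕ) (d : Fin D) (β : Fin D → ℕ), kk (shiftm m d β) = kk β + m := by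
    intro m d β
    unfold kk shiftm
    rw [Finset.sum_add_distrib, Finset.sum_ite_eq' Finset.univ d (fun _ => m)]
    simp only [Finset.mem_univ, if_true]
    omega
  have hshiftinj : ∀ (m : ℕ) (d : Fin D) (x y : Fin D → ℕ), shiftm m d x = shiftm m d y → x = y := by
    intro m d x y h
    funext i
    have := congrFun h i
    simp only [shiftm] at this
    omega
  have hunshift : ∀ (m : ℕ) (d : Fin D) (β : Fin D → ℕ),
      (fun i => shiftm m d β i - if i = d then m else 0) = β := by
    intro m d β
    funext i
    by_cases h : i = d <;> simp [shiftm, h]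
  -- rewrite the function as a finite sum in P-form
  have hfun : (fun t => ∑ᶠ α : Fin D → ℕ,
        F α t * S t ^ (-(((∑ d, α d : ℕ) : ℤ) + (D : ℤ))) * Hb θ₁ α (A t))
      = fun t => ∑ α ∈ T, F α t * (((θh - 1) * t + 1) ^ (kk α) * prodphi θ₁ θh w v t α) := by
    funext t
    rw [finsum_eq_finset_sum_of_support_subset _ (s := T) ?_]
    · refine Finset.sum_congr rfl fun α _ => ?_
      rw [hS, hA, aux_Hb_eq, aux_zpow, mul_assoc]
      rfl
    · intro α hα
      simp only [Function.mem_support] at hα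
      have hFα : F α ≠ 0 := by
        intro h
        apply hα
        rw [h]
        simp
      exact hsubT ((hmem α).2 hFα)
  -- the target finsum is a finite sum over T
  have hval1 : (∑ᶠ α : Fin D → ℕ,
        S τ ^ (-(((∑ d, α d : ℕ) : ℤ) + (D : ℤ))) * Hb θ₁ α (A τ) *
          (F' α τ - ∑ d : Fin D, S τ ^ 2 *
            (θ₁ * R τ *
                (if 2 ≤ α d then F (fun i => α i - (if i = d then 2 else 0)) τ else 0)
              + w d * Real.sqrt θ₁ *
                (if 1 ≤ α d then F (fun i => α i - (if i = d then 1 else 0)) τ else 0))))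
      = ∑ α ∈ T,
        S τ ^ (-(((∑ d, α d : ℕ) : ℤ) + (D : ℤ))) * Hb θ₁ α (A τ) *
          (F' α τ - ∑ d : Fin D, S τ ^ 2 *
            (θ₁ * R τ *
                (if 2 ≤ α d then F (fun i => α i - (if i = d then 2 else 0)) τ else 0)
              + w d * Real.sqrt θ₁ *
                (if 1 ≤ α d then F (fun i => α i - (if i = d then 1 else 0)) τ else 0))) := by
    refine finsum_eq_finset_sum_of_support_subset _ ?_
    intro α hα
    simp only [Function.mem_support] at hα
    by_contra hT'
    apply hα
    have hα1 : α ∉ suppT := fun h => hT' (hsubT h)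
    have hite : ∀ (m : ℕ) (d : Fin D), m = 1 ∨ m = 2 →
        (if m ≤ α d then F (fun i => α i - (if i = d then m else 0)) τ else 0) = 0 := by
      intro m d hm
      split_ifs with h
      · by_cases hv : F (fun i => α i - (if i = d then m else 0)) τ = 0
        · exact hv
        · exfalso
          have hβ : (fun i => α i - (if i = d then m else 0)) ∈ suppT := by
            refine (hmem _).2 fun h0 => hv ?_
            rw [h0]
            rfl
          have haim : α ∈ suppT.image (shiftm m d) := by
            refine Finset.mem_image.2 ⟨_, hβ, ?_⟩
            funext i
            by_cases hid : i = d
            · subst hid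
              simp [shiftm]
              omega
            · simp [shiftm, hid]
          exact hT' (him m d hm haim)
      · rfl
    rw [hF'zero α hα1]
    have h2 := fun d => hite 2 d (Or.inr rfl)
    have h1 := fun d => hite 1 d (Or.inl rfl)
    simp only [h2, h1, mul_zero, zero_mul, add_zero, zero_add, Finset.sum_const_zero,
      sub_zero, zero_sub, neg_zero]
  -- generic reindexing along a shift
  have hsum_shift : ∀ (m : ℕ) (d : Fin D), (m = 1 ∨ m = 2) → ∀ g : (Fin D → ℕ) → ℝ,
      (∀ α ∈ T, α ∉ suppT.image (shiftm m d) → g α = 0) →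
      ∑ α ∈ T, g α = ∑ β ∈ suppT, g (shiftm m d β) := by
    intro m d hm g hg
    rw [← Finset.sum_subset (him m d hm) hg]
    exact Finset.sum_image fun x _ y _ h => hshiftinj m d x y h
  -- the two reindexing claims
  have claim : ∀ (m : ℕ) (d : Fin D), (m = 1 ∨ m = 2) → ∀ c : ℝ,
      ∑ α ∈ T, (((θh - 1) * τ + 1) ^ (kk α) * prodphi θ₁ θh w v τ α *
          ((1 / ((θh - 1) * τ + 1)) ^ 2 * c / ((θh - 1) * τ + 1) ^ (m - 1) *
            (if m ≤ α d then F (fun i => α i - (if i = d then m else 0)) τ else 0)))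
      = ∑ β ∈ suppT, F β τ *
          (c * ((θh - 1) * τ + 1) ^ (kk β - 1) * prodphi θ₁ θh w v τ (shiftm m d β)) := by
    intro m d hm c
    rw [hsum_shift m d hm _ ?_]
    · refine Finset.sum_congr rfl fun β hβ => ?_
      have hcond : m ≤ shiftm m d β d := by simp [shiftm]
      rw [if_pos hcond, hunshift m d β, hkshift m d β]
      have h1 : 1 ≤ kk β := hkk1 β
      have hm1 : m - 1 + 1 = m := by rcases hm with h | h <;> subst h <;> rfl
      rw [show kk β + m = (kk β - 1) + ((m - 1) + 2) by omega, pow_add, pow_add]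
      field_simp
    · intro α hα hnα
      split_ifs with h
      · by_cases hv : F (fun i => α i - (if i = d then m else 0)) τ = 0
        · simp [hv]
        · exfalso
          apply hnα
          have hβ : (fun i => α i - (if i = d then m else 0)) ∈ suppT := by
            refine (hmem _).2 fun h0 => hv ?_
            rw [h0]
            rfl
          refine Finset.mem_image.2 ⟨_, hβ, ?_⟩
          funext i
          by_cases hid : i = d
          · subst hid
            simp [shiftm]
            omega
          · simp [shiftm, hid]
      · simp
  have hTsupp : ∀ g : (Fin D → ℕ) → ℝ,
      ∑ α ∈ T, F α τ * g α = ∑ α ∈ suppT, F α τ * g α := by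
    intro g
    refine (Finset.sum_subset hsubT fun x _ hnx => ?_).symm
    rw [hFzero x hnx τ, zero_mul]
  have hW : ∀ d : Fin D,
      ∑ α ∈ T, (((θh - 1) * τ + 1) ^ (kk α) * prodphi θ₁ θh w v τ α * ((1 / ((θh - 1) * τ + 1)) ^ 2 * (θ₁ * (θh - 1)) / ((θh - 1) * τ + 1) ^ (2 - 1) * (if 2 ≤ α d then F (fun i => α i - (if i = d then 2 else 0)) τ else 0))
        + ((θh - 1) * τ + 1) ^ (kk α) * prodphi θ₁ θh w v τ α * ((1 / ((θh - 1) * τ + 1)) ^ 2 * (w d * Real.sqrt θ₁) / ((θh - 1) * τ + 1) ^ (1 - 1) * (if 1 ≤ α d then F (fun i => α i - (if i = d then 1 else 0)) τ else 0)))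
      = ∑ α ∈ T, F α τ * (θ₁ * (θh - 1) * ((θh - 1) * τ + 1) ^ (kk α - 1) * prodphi θ₁ θh w v τ (shiftm 2 d α) + w d * Real.sqrt θ₁ * ((θh - 1) * τ + 1) ^ (kk α - 1) * prodphi θ₁ θh w v τ (shiftm 1 d α)) := by
    intro d
    rw [Finset.sum_add_distrib, claim 2 d (Or.inr rfl) (θ₁ * (θh - 1)),
      claim 1 d (Or.inl rfl) (w d * Real.sqrt θ₁), ← Finset.sum_add_distrib]
    calc ∑ β ∈ suppT, (F β τ * (θ₁ * (θh - 1) * ((θh - 1) * τ + 1) ^ (kk β - 1) * prodphi θ₁ θh w v τ (shiftm 2 d β))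
            + F β τ * (w d * Real.sqrt θ₁ * ((θh - 1) * τ + 1) ^ (kk β - 1) * prodphi θ₁ θh w v τ (shiftm 1 d β)))
        = ∑ β ∈ suppT, F β τ * (θ₁ * (θh - 1) * ((θh - 1) * τ + 1) ^ (kk β - 1) * prodphi θ₁ θh w v τ (shiftm 2 d β)
            + w d * Real.sqrt θ₁ * ((θh - 1) * τ + 1) ^ (kk β - 1) * prodphi θ₁ θh w v τ (shiftm 1 d β)) :=
          Finset.sum_congr rfl fun β _ => (mul_add _ _ _).symm
      _ = _ := (hTsupp _).symm
  have expand : ∀ α ∈ T, S τ ^ (-(((∑ d, α d : ℕ) : ℤ) + (D : ℤ))) * Hb θ₁ α (A τ) *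
          (F' α τ - ∑ d : Fin D, S τ ^ 2 *
            (θ₁ * R τ *
                (if 2 ≤ α d then F (fun i => α i - (if i = d then 2 else 0)) τ else 0)
              + w d * Real.sqrt θ₁ *
                (if 1 ≤ α d then F (fun i => α i - (if i = d then 1 else 0)) τ else 0)))
      = F' α τ * (((θh - 1) * τ + 1) ^ (kk α) * prodphi θ₁ θh w v τ α) - ∑ d : Fin D, (((θh - 1) * τ + 1) ^ (kk α) * prodphi θ₁ θh w v τ α * ((1 / ((θh - 1) * τ + 1)) ^ 2 * (θ₁ * (θh - 1)) / ((θh - 1) * τ + 1) ^ (2 - 1) * (if 2 ≤ α d then F (fun i => α i - (if i = d then 2 else 0)) τ else 0))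
          + ((θh - 1) * τ + 1) ^ (kk α) * prodphi θ₁ θh w v τ α * ((1 / ((θh - 1) * τ + 1)) ^ 2 * (w d * Real.sqrt θ₁) / ((θh - 1) * τ + 1) ^ (1 - 1) * (if 1 ≤ α d then F (fun i => α i - (if i = d then 1 else 0)) τ else 0))) := by
    intro α _
    rw [hS, hR, hA, aux_Hb_eq, aux_zpow, mul_sub, Finset.mul_sum]
    simp only [kk]
    congr 1
    · ring
    · exact Finset.sum_congr rfl fun d _ => by ring
  have hfinal : (∑ α ∈ T, S τ ^ (-(((∑ d, α d : ℕ) : ℤ) + (D : ℤ))) * Hb θ₁ α (A τ) *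
          (F' α τ - ∑ d : Fin D, S τ ^ 2 *
            (θ₁ * R τ *
                (if 2 ≤ α d then F (fun i => α i - (if i = d then 2 else 0)) τ else 0)
              + w d * Real.sqrt θ₁ *
                (if 1 ≤ α d then F (fun i => α i - (if i = d then 1 else 0)) τ else 0))))
      = ∑ α ∈ T, (F' α τ * (((θh - 1) * τ + 1) ^ (kk α) * prodphi θ₁ θh w v τ α)
          + F α τ * GDf θ₁ θh w v τ α) := by
    calc ∑ α ∈ T, S τ ^ (-(((∑ d, α d : ℕ) : ℤ) + (D : ℤ))) * Hb θ₁ α (A τ) *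
          (F' α τ - ∑ d : Fin D, S τ ^ 2 *
            (θ₁ * R τ *
                (if 2 ≤ α d then F (fun i => α i - (if i = d then 2 else 0)) τ else 0)
              + w d * Real.sqrt θ₁ *
                (if 1 ≤ α d then F (fun i => α i - (if i = d then 1 else 0)) τ else 0)))
        = ∑ α ∈ T, (F' α τ * (((θh - 1) * τ + 1) ^ (kk α) * prodphi θ₁ θh w v τ α) - ∑ d : Fin D, (((θh - 1) * τ + 1) ^ (kk α) * prodphi θ₁ θh w v τ α * ((1 / ((θh - 1) * τ + 1)) ^ 2 * (θ₁ * (θh - 1)) / ((θh - 1) * τ + 1) ^ (2 - 1) * (if 2 ≤ α d then F (fun i => α i - (if i = d then 2 else 0)) τ else 0))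
            + ((θh - 1) * τ + 1) ^ (kk α) * prodphi θ₁ θh w v τ α * ((1 / ((θh - 1) * τ + 1)) ^ 2 * (w d * Real.sqrt θ₁) / ((θh - 1) * τ + 1) ^ (1 - 1) * (if 1 ≤ α d then F (fun i => α i - (if i = d then 1 else 0)) τ else 0)))) := Finset.sum_congr rfl expand
      _ = (∑ α ∈ T, F' α τ * (((θh - 1) * τ + 1) ^ (kk α) * prodphi θ₁ θh w v τ α)) - ∑ α ∈ T, ∑ d : Fin D, (((θh - 1) * τ + 1) ^ (kk α) * prodphi θ₁ θh w v τ α * ((1 / ((θh - 1) * τ + 1)) ^ 2 * (θ₁ * (θh - 1)) / ((θh - 1) * τ + 1) ^ (2 - 1) * (if 2 ≤ α d then F (fun i => α i - (if i = d then 2 else 0)) τ else 0))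
            + ((θh - 1) * τ + 1) ^ (kk α) * prodphi θ₁ θh w v τ α * ((1 / ((θh - 1) * τ + 1)) ^ 2 * (w d * Real.sqrt θ₁) / ((θh - 1) * τ + 1) ^ (1 - 1) * (if 1 ≤ α d then F (fun i => α i - (if i = d then 1 else 0)) τ else 0))) := Finset.sum_sub_distrib _ _
      _ = (∑ α ∈ T, F' α τ * (((θh - 1) * τ + 1) ^ (kk α) * prodphi θ₁ θh w v τ α)) - ∑ d : Fin D, ∑ α ∈ T, (((θh - 1) * τ + 1) ^ (kk α) * prodphi θ₁ θh w v τ α * ((1 / ((θh - 1) * τ + 1)) ^ 2 * (θ₁ * (θh - 1)) / ((θh - 1) * τ + 1) ^ (2 - 1) * (if 2 ≤ α d then F (fun i => α i - (if i = d then 2 else 0)) τ else 0))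
            + ((θh - 1) * τ + 1) ^ (kk α) * prodphi θ₁ θh w v τ α * ((1 / ((θh - 1) * τ + 1)) ^ 2 * (w d * Real.sqrt θ₁) / ((θh - 1) * τ + 1) ^ (1 - 1) * (if 1 ≤ α d then F (fun i => α i - (if i = d then 1 else 0)) τ else 0))) := by rw [Finset.sum_comm]
      _ = (∑ α ∈ T, F' α τ * (((θh - 1) * τ + 1) ^ (kk α) * prodphi θ₁ θh w v τ α)) - ∑ d : Fin D, ∑ α ∈ T, F α τ * (θ₁ * (θh - 1) * ((θh - 1) * τ + 1) ^ (kk α - 1) * prodphi θ₁ θh w v τ (shiftm 2 d α) + w d * Real.sqrt θ₁ * ((θh - 1) * τ + 1) ^ (kk α - 1) * prodphi θ₁ θh w v τ (shiftm 1 d α)) := by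
            exact congrArg _ (Finset.sum_congr rfl fun d _ => hW d)
      _ = (∑ α ∈ T, F' α τ * (((θh - 1) * τ + 1) ^ (kk α) * prodphi θ₁ θh w v τ α)) - ∑ α ∈ T, ∑ d : Fin D, F α τ * (θ₁ * (θh - 1) * ((θh - 1) * τ + 1) ^ (kk α - 1) * prodphi θ₁ θh w v τ (shiftm 2 d α) + w d * Real.sqrt θ₁ * ((θh - 1) * τ + 1) ^ (kk α - 1) * prodphi θ₁ θh w v τ (shiftm 1 d α)) := by
            rw [Finset.sum_comm]
      _ = ∑ α ∈ T, (F' α τ * (((θh - 1) * τ + 1) ^ (kk α) * prodphi θ₁ θh w v τ α) - ∑ d : Fin D, F α τ * (θ₁ * (θh - 1) * ((θh - 1) * τ + 1) ^ (kk α - 1) * prodphi θ₁ θh w v τ (shiftm 2 d α) + w d * Real.sqrt θ₁ * ((θh - 1) * τ + 1) ^ (kk α - 1) * prodphi θ₁ θh w v τ (shiftm 1 d α))) := (Finset.sum_sub_distrib _ _).symm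
      _ = ∑ α ∈ T, (F' α τ * (((θh - 1) * τ + 1) ^ (kk α) * prodphi θ₁ θh w v τ α)
            + F α τ * GDf θ₁ θh w v τ α) := by
            refine Finset.sum_congr rfl fun α _ => ?_
            simp only [GDf, mul_neg, Finset.mul_sum]
            rw [sub_eq_add_neg]
  rw [hfun, hval1, hfinal]
  exact HasDerivWithinAt.fun_sum fun α _ =>
    (hderiv α τ ⟨hτ0, hτ1⟩).mul ((aux_G_deriv hD hθ₁ θh w v α τ).hasDerivWithinAt)
end
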